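/- Let G be an n-vertex (ρ,d)-dense graph with minimum degree δ(G) ≥ (1/2+η)n, and apply the degree form of the regularity lemma as above to obtain clusters V_1,…,V_L of size m, exceptional set V_0 with |V_0| ≤ εn, pure graph G', and reduced graph R on [L]. Set ρ* = max{3ρ, 3δ}. Then R is (ρ*, d)-dense: every X ⊆ [L] satisfies e(R[X]) ≥ d·C(|X|,2) − ρ*L². -/

import Mathlib

open Finset

/-- The number of edges of `G` with both endpoints in `X`, i.e. `e(G[X])`. -/
noncomputable def inducedEdgeCount {V : Type*} [Fintype V] (G : SimpleGraph V)
    (X : Finset V) : ℕ :=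
  letI : DecidableEq V := Classical.decEq V
  letI : DecidableRel G.Adj := Classical.decRel _
  letI : DecidablePred (fun e : Sym2 V => ∀ v ∈ e, v ∈ X) := Classical.decPred _
  (G.edgeFinset.filter (fun e => ∀ v ∈ e, v ∈ X)).card

/-- A graph `G` on `n` vertices is `(ρ,d)`-dense if every vertex subset `X` satisfies
`e(G[X]) ≥ d·C(|X|,2) − ρn²`. -/
def LocallyDense {V : Type*} [Fintype V] (G : SimpleGraph V) (ρ d : ℝ) : Prop :=
  ∀ X : Finset V,
    d * (X.card.choose 2 : ℝ) - ρ * (Fintype.card V : ℝ) ^ 2 ≤ (inducedEdgeCount G X : ℝ)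


/-- The number of pairs `(a,b) ∈ A × B` with `a` adjacent to `b` in `G`. -/
noncomputable def pairEdgeCount {V : Type*} (G : SimpleGraph V) (A B : Finset V) : ℕ :=
  letI : DecidableEq V := Classical.decEq V
  letI : DecidableRel G.Adj := Classical.decRel _
  ((A ×ˢ B).filter (fun p => G.Adj p.1 p.2)).card

/-- The density `d(A,B) = e(A,B)/(|A||B|)` of the bipartite graph `G[A,B]`. -/
noncomputable def edgeDens {V : Type*} (G : SimpleGraph V) (A B : Finset V) : ℝ :=
  (pairEdgeCount G A B : ℝ) / ((A.card : ℝ) * (B.card : ℝ))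

/-- `G[A,B]` is `ε`-regular: all `X ⊆ A`, `Y ⊆ B` with `|X| ≥ ε|A|`, `|Y| ≥ ε|B|` satisfy
`|d(A,B) − d(X,Y)| ≤ ε`. -/
def IsRegularPair {V : Type*} (G : SimpleGraph V) (ε : ℝ) (A B : Finset V) : Prop :=
  ∀ X ⊆ A, ∀ Y ⊆ B, ε * (A.card : ℝ) ≤ (X.card : ℝ) → ε * (B.card : ℝ) ≤ (Y.card : ℝ) →
    |edgeDens G A B - edgeDens G X Y| ≤ ε


lemma inducedEdgeCount_eq {V : Type*} [Fintype V] [DecidableEq V] (G : SimpleGraph V)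
    [DecidableRel G.Adj] (Y : Finset V) [DecidablePred (fun e : Sym2 V => ∀ v ∈ e, v ∈ Y)] :
    inducedEdgeCount G Y = (G.edgeFinset.filter (fun e => ∀ v ∈ e, v ∈ Y)).card := by
  unfold inducedEdgeCount
  congr!

lemma aux_sub {V : Type*} [Fintype V] [DecidableEq V] (G G' : SimpleGraph V)
    [DecidableRel G.Adj] [DecidableRel G'.Adj] (hsub : G' ≤ G) (Y : Finset V)
    (K : ℝ) (hK : ∀ v : V, (G.degree v : ℝ) - K ≤ (G'.degree v : ℝ)) :
    (inducedEdgeCount G Y : ℝ) ≤ (inducedEdgeCount G' Y : ℝ) + Y.card * K := by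
  classical
  rw [inducedEdgeCount_eq, inducedEdgeCount_eq]
  set P := fun e : Sym2 V => ∀ v ∈ e, v ∈ Y with hP
  set D := (G.edgeFinset.filter P) \ G'.edgeFinset with hD
  have hsplit : (G.edgeFinset.filter P).card ≤ (G'.edgeFinset.filter P).card + D.card := by
    have hsub2 : G.edgeFinset.filter P ⊆ (G'.edgeFinset.filter P) ∪ D := by
      intro e he
      by_cases h : e ∈ G'.edgeFinset
      · exact mem_union_left _ (mem_filter.mpr ⟨h, (mem_filter.mp he).2⟩)
      · exact mem_union_right _ (mem_sdiff.mpr ⟨he, h⟩)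
    exact le_trans (card_le_card hsub2) (card_union_le _ _)
  have hinc : ∀ v, G'.incidenceFinset v ⊆ G.incidenceFinset v := by
    intro v e he
    rw [SimpleGraph.mem_incidenceFinset] at he ⊢
    exact ⟨SimpleGraph.edgeSet_mono hsub he.1, he.2⟩
  have hDsub : D ⊆ Y.biUnion (fun v => G.incidenceFinset v \ G'.incidenceFinset v) := by
    intro e he
    rw [hD, mem_sdiff, mem_filter] at he
    obtain ⟨⟨heG, hY'⟩, heG'⟩ := he
    have hu : e.out.1 ∈ e := Sym2.out_fst_mem e
    refine mem_biUnion.mpr ⟨e.out.1, hY' _ hu, mem_sdiff.mpr ⟨?_, ?_⟩⟩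
    · exact (SimpleGraph.mem_incidenceFinset _ _ _).mpr ⟨SimpleGraph.mem_edgeFinset.mp heG, hu⟩
    · intro h
      exact heG' (SimpleGraph.mem_edgeFinset.mpr ((SimpleGraph.mem_incidenceFinset _ _ _).mp h).1)
  have hDcard : (D.card : ℝ) ≤ ∑ v ∈ Y, ((G.degree v : ℝ) - G'.degree v) := by
    have h1 : D.card ≤ ∑ v ∈ Y, (G.incidenceFinset v \ G'.incidenceFinset v).card :=
      le_trans (card_le_card hDsub) card_biUnion_le
    have h2 : ∀ v ∈ Y, ((G.incidenceFinset v \ G'.incidenceFinset v).card : ℝ)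
        = (G.degree v : ℝ) - G'.degree v := by
      intro v _
      rw [card_sdiff_of_subset (hinc v), Nat.cast_sub (card_le_card (hinc v)),
        SimpleGraph.card_incidenceFinset_eq_degree, SimpleGraph.card_incidenceFinset_eq_degree]
    calc (D.card : ℝ) ≤ (∑ v ∈ Y, (G.incidenceFinset v \ G'.incidenceFinset v).card : ℕ) := by
          exact_mod_cast h1
      _ = ∑ v ∈ Y, ((G.incidenceFinset v \ G'.incidenceFinset v).card : ℝ) := by push_cast; ring
      _ = ∑ v ∈ Y, ((G.degree v : ℝ) - G'.degree v) := Finset.sum_congr rfl h2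
  have hsum : ∑ v ∈ Y, ((G.degree v : ℝ) - G'.degree v) ≤ Y.card * K := by
    calc ∑ v ∈ Y, ((G.degree v : ℝ) - G'.degree v) ≤ ∑ _v ∈ Y, K :=
          Finset.sum_le_sum (fun v _ => by linarith [hK v])
      _ = Y.card * K := by rw [Finset.sum_const, nsmul_eq_mul]
  have hsplit' : ((G.edgeFinset.filter P).card : ℝ)
      ≤ (G'.edgeFinset.filter P).card + D.card := by exact_mod_cast hsplit
  linarith

lemma aux_count {V : Type*} [Fintype V] [DecidableEq V] (G' : SimpleGraph V)
    [DecidableRel G'.Adj] {L : ℕ} (hL : 0 < L) (R : SimpleGraph (Fin L))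
    [DecidableRel R.Adj] (m : ℕ)
    (Vc : Fin L → Finset V)
    (hsize : ∀ i, (Vc i).card = m)
    (hdisj : ∀ i j, i ≠ j → Disjoint (Vc i) (Vc j))
    (hempty : ∀ i, ∀ x ∈ Vc i, ∀ y ∈ Vc i, ¬ G'.Adj x y)
    (hpure : ∀ i j, i ≠ j → ¬ R.Adj i j → ∀ x ∈ Vc i, ∀ y ∈ Vc j, ¬ G'.Adj x y)
    (X : Finset (Fin L)) :
    inducedEdgeCount G' (X.biUnion Vc) ≤ (m * m) * inducedEdgeCount R X := by
  classical
  rw [inducedEdgeCount_eq, inducedEdgeCount_eq]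
  set Y := X.biUnion Vc with hYdef
  set idx : V → Fin L := fun v => if h : ∃ i, v ∈ Vc i then h.choose else ⟨0, hL⟩ with hidxdef
  have hidx : ∀ (i : Fin L) (v : V), v ∈ Vc i → idx v = i := by
    intro i v hv
    have h : ∃ j, v ∈ Vc j := ⟨i, hv⟩
    have hc : v ∈ Vc h.choose := h.choose_spec
    have h1 : idx v = h.choose := by simp only [hidxdef, dif_pos h]
    rcases eq_or_ne h.choose i with h2 | h2
    · rw [h1, h2]
    · exact absurd hv (Finset.disjoint_left.mp (hdisj h.choose i h2) hc)
  have hYmem : ∀ v ∈ Y, v ∈ Vc (idx v) ∧ idx v ∈ X := by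
    intro v hv
    rw [hYdef, mem_biUnion] at hv
    obtain ⟨i, hiX, hvi⟩ := hv
    rw [hidx i v hvi]
    exact ⟨hvi, hiX⟩
  set s := G'.edgeFinset.filter (fun e : Sym2 V => ∀ v ∈ e, v ∈ Y) with hs
  have key : ∀ e ∈ s, ∀ u w : V, e = s(u, w) →
      G'.Adj u w ∧ u ∈ Vc (idx u) ∧ idx u ∈ X ∧ w ∈ Vc (idx w) ∧ idx w ∈ X ∧
        idx u ≠ idx w ∧ R.Adj (idx u) (idx w) := by
    intro e he u w hew
    rw [hs, mem_filter, SimpleGraph.mem_edgeFinset, hew] at he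
    obtain ⟨hadj', hmem⟩ := he
    have hadj : G'.Adj u w := (SimpleGraph.mem_edgeSet _).mp hadj'
    have hu : u ∈ Y := hmem u (Sym2.mem_mk_left u w)
    have hw : w ∈ Y := hmem w (Sym2.mem_mk_right u w)
    obtain ⟨hu1, hu2⟩ := hYmem u hu
    obtain ⟨hw1, hw2⟩ := hYmem w hw
    have hne : idx u ≠ idx w := by
      intro h
      exact hempty (idx u) u hu1 w (h ▸ hw1) hadj
    have hR : R.Adj (idx u) (idx w) := by
      by_contra hNR
      exact hpure (idx u) (idx w) hne hNR u hu1 w hw1 hadj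
    exact ⟨hadj, hu1, hu2, hw1, hw2, hne, hR⟩
  have hmk : ∀ e : Sym2 V, e = s(e.out.1, e.out.2) := fun e => e.out_eq.symm
  have hmap : ∀ e : Sym2 V, Sym2.map idx e = s(idx e.out.1, idx e.out.2) := by
    intro e
    conv_lhs => rw [hmk e]
    rw [Sym2.map_pair_eq]
  have hfiber : ∀ b ∈ s.image (Sym2.map idx),
      (s.filter (fun e => Sym2.map idx e = b)).card ≤ m * m := by
    intro b hb
    obtain ⟨e0, he0, hfe0⟩ := mem_image.mp hb
    obtain ⟨-, -, -, -, -, hne0, -⟩ := key e0 he0 e0.out.1 e0.out.2 (hmk e0)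
    set i := idx e0.out.1
    set j := idx e0.out.2
    have hbij : b = s(i, j) := by rw [← hfe0, hmap]
    have hmm : (Vc i ×ˢ Vc j).card = m * m := by
      rw [card_product, hsize, hsize]
    rw [← hmm]
    apply Finset.card_le_card_of_injOn
      (fun e => if idx e.out.1 = i then e.out else e.out.swap)
    · intro e he
      simp only [mem_coe, mem_filter] at he ⊢
      obtain ⟨hes, heb⟩ := he
      obtain ⟨-, hu1, -, hw1, -, hnee, -⟩ := key e hes e.out.1 e.out.2 (hmk e)
      rw [hmap, hbij] at heb
      rcases Sym2.eq_iff.mp heb with ⟨h1, h2⟩ | ⟨h1, h2⟩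
      · rw [if_pos h1]
        exact mem_product.mpr ⟨h1 ▸ hu1, h2 ▸ hw1⟩
      · rw [if_neg (by rw [h1]; rw [h1, h2] at hnee; exact hnee)]
        exact mem_product.mpr ⟨h2 ▸ hw1, h1 ▸ hu1⟩
    · intro e he e' he' hgg
      have h1 : ∀ f : Sym2 V, Sym2.mk.uncurry (if idx f.out.1 = i then f.out else f.out.swap) = f := by
        intro f
        split
        · exact f.out_eq
        · exact (Sym2.eq_swap).trans f.out_eq
      rw [← h1 e, ← h1 e']
      exact congrArg Sym2.mk.uncurry hgg
  have himg : s.image (Sym2.map idx) ⊆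
      R.edgeFinset.filter (fun e : Sym2 (Fin L) => ∀ v ∈ e, v ∈ X) := by
    intro b hb
    obtain ⟨e0, he0, hfe0⟩ := mem_image.mp hb
    obtain ⟨-, -, hu2, -, hw2, -, hR⟩ := key e0 he0 e0.out.1 e0.out.2 (hmk e0)
    rw [← hfe0, hmap]
    rw [mem_filter, SimpleGraph.mem_edgeFinset, SimpleGraph.mem_edgeSet]
    refine ⟨hR, ?_⟩
    intro v hv
    rcases Sym2.mem_iff.mp hv with h | h
    · exact h ▸ hu2
    · exact h ▸ hw2
  calc s.card ≤ (m * m) * (s.image (Sym2.map idx)).card :=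
        Finset.card_le_mul_card_image s (m * m) hfiber
    _ ≤ (m * m) * (R.edgeFinset.filter (fun e : Sym2 (Fin L) => ∀ v ∈ e, v ∈ X)).card :=
        Nat.mul_le_mul_left _ (card_le_card himg)

lemma stmt18_numeric (ρ d ε δ M mr Lr xr n EG EG' ER C2 Cmx : ℝ)
    (hρ : 0 < ρ) (hd : 0 < d) (hε : 0 < ε) (hδ : 0 < δ)
    (hεδ : ε ≤ δ / 10) (hε1 : ε ≤ 1 / 10)
    (hM3ρ : 3 * ρ ≤ M) (hM3δ : 3 * δ ≤ M)
    (hm1 : 1 ≤ mr) (hL1 : 1 ≤ Lr) (hx0 : 0 ≤ xr) (hxL : xr ≤ Lr) (hn0 : 0 ≤ n)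
    (h9 : 9 * n ≤ 10 * (Lr * mr))
    (hchoose : mr * mr * C2 ≤ Cmx)
    (hc1 : d * Cmx - ρ * n ^ 2 ≤ EG)
    (hc2 : EG ≤ EG' + (mr * xr) * ((δ + ε) * n))
    (hc3 : EG' ≤ mr * mr * ER) :
    d * C2 - M * Lr ^ 2 ≤ ER := by
  have hM0 : 0 ≤ M := le_trans (by linarith) hM3ρ
  have hmr0 : (0 : ℝ) ≤ mr := by linarith
  have hLm0 : (0 : ℝ) ≤ Lr * mr := mul_nonneg (by linarith) hmr0
  have hsq := mul_self_le_mul_self (by linarith : (0:ℝ) ≤ 9 * n) h9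
  have hn23 : 81 * n ^ 2 ≤ 100 * (Lr * mr) ^ 2 := by ring_nf at hsq ⊢; linarith
  have p1 : 0 ≤ ρ * (100 * (Lr * mr) ^ 2 - 81 * n ^ 2) :=
    mul_nonneg hρ.le (by linarith)
  have p2 : 0 ≤ (M - 3 * ρ) * (Lr * mr) ^ 2 :=
    mul_nonneg (by linarith) (sq_nonneg _)
  have p3 : 0 ≤ (M - 3 * δ) * (Lr * mr) ^ 2 :=
    mul_nonneg (by linarith) (sq_nonneg _)
  have p4 : 0 ≤ M * (Lr * mr) ^ 2 := mul_nonneg hM0 (sq_nonneg _)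
  have a1 : δ + ε ≤ (11 / 10) * δ := by linarith
  have a2 : mr * xr ≤ mr * Lr := mul_le_mul_of_nonneg_left hxL hmr0
  have a3 : n ≤ (10 / 9) * (Lr * mr) := by linarith
  have b1 : (δ + ε) * n ≤ ((11 / 10) * δ) * ((10 / 9) * (Lr * mr)) :=
    mul_le_mul a1 a3 hn0 (by linarith)
  have b2 : (mr * xr) * ((δ + ε) * n)
      ≤ (mr * Lr) * (((11 / 10) * δ) * ((10 / 9) * (Lr * mr))) :=
    mul_le_mul a2 b1 (mul_nonneg (by linarith) hn0) (mul_nonneg hmr0 (by linarith))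
  have hkey : ρ * n ^ 2 + (mr * xr) * ((δ + ε) * n) ≤ M * Lr ^ 2 * mr ^ 2 := by
    nlinarith [p1, p2, p3, p4, b2]
  have hd2 : d * (mr * mr * C2) ≤ d * Cmx := mul_le_mul_of_nonneg_left hchoose hd.le
  have hmain : (d * C2 - M * Lr ^ 2) * mr ^ 2 ≤ ER * mr ^ 2 := by
    linarith [hd2, hc1, hc2, hc3, hkey]
  have hmr2 : (0 : ℝ) < mr ^ 2 := by positivity
  have hfin := (mul_le_mul_iff_left₀ hmr2).mp hmain
  linarith

set_option maxHeartbeats 1000000 in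
/-- the reduced graph of a locally dense graph is locally dense. With the
regularity-lemma setup (clusters `Vc i` of common size `m`, exceptional set `V₀` of size at
most `εn`, pure graph `G'` losing at most `(δ+ε)n` at each vertex, no `G'`-edges inside
clusters nor between clusters non-adjacent in `R`), if `G` is `(ρ,d)`-dense then `R` is
`(ρ*, d)`-dense where `ρ* = max{3ρ, 3δ}`:
every `X ⊆ [L]` satisfies `e(R[X]) ≥ d·C(|X|,2) − ρ*L²`. -/
theorem stmt_18 {V : Type*} [Fintype V] [DecidableEq V] (G G' : SimpleGraph V)
    [DecidableRel G.Adj] [DecidableRel G'.Adj]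
    (L : ℕ) (R : SimpleGraph (Fin L)) [DecidableRel R.Adj]
    (η ρ d ε δ : ℝ) (hρ : 0 < ρ) (hd : 0 < d) (hε : 0 < ε) (hδ : 0 < δ)
    (hεδ : ε ≤ δ / 10) (hε1 : ε ≤ 1 / 10)
    (m : ℕ) (hm : 0 < m)
    (Vc : Fin L → Finset V) (V₀ : Finset V)
    (hV0 : (V₀.card : ℝ) ≤ ε * (Fintype.card V : ℝ))
    (hsize : ∀ i, (Vc i).card = m)
    (hdisj : ∀ i j, i ≠ j → Disjoint (Vc i) (Vc j))
    (hdisj0 : ∀ i, Disjoint V₀ (Vc i))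
    (hcover : ∀ v : V, v ∈ V₀ ∨ ∃ i, v ∈ Vc i)
    (hdense : LocallyDense G ρ d)
    (hmin : ∀ v : V, (1 / 2 + η) * (Fintype.card V : ℝ) ≤ (G.degree v : ℝ))
    (hsub : G' ≤ G)
    (hdeg : ∀ v : V, (G.degree v : ℝ) - (δ + ε) * (Fintype.card V : ℝ) ≤ (G'.degree v : ℝ))
    (hempty : ∀ i, ∀ x ∈ Vc i, ∀ y ∈ Vc i, ¬ G'.Adj x y)
    (hpure : ∀ i j, i ≠ j → ¬ R.Adj i j → ∀ x ∈ Vc i, ∀ y ∈ Vc j, ¬ G'.Adj x y)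
    (hreg : ∀ i j, R.Adj i j →
      IsRegularPair G' ε (Vc i) (Vc j) ∧ δ ≤ edgeDens G' (Vc i) (Vc j)) :
    LocallyDense R (max (3 * ρ) (3 * δ)) d := by
  classical
  intro X
  simp only [Fintype.card_fin]
  set M := max (3 * ρ) (3 * δ) with hM
  have hM3ρ : 3 * ρ ≤ M := le_max_left _ _
  have hM3δ : 3 * δ ≤ M := le_max_right _ _
  have hM0 : 0 ≤ M := le_trans (by linarith) hM3ρ
  have hE0 : (0 : ℝ) ≤ (inducedEdgeCount R X : ℝ) := Nat.cast_nonneg _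
  by_cases hx1 : X.card ≤ 1
  · have hch : X.card.choose 2 = 0 := Nat.choose_eq_zero_of_lt (by omega)
    rw [hch]
    have : (0 : ℝ) ≤ M * (L : ℝ) ^ 2 := by positivity
    push_cast
    linarith
  · push_neg at hx1
    have hxL : X.card ≤ L := by
      have := Finset.card_le_univ X
      simpa using this
    have hL : 0 < L := lt_of_lt_of_le (by omega) hxL
    set Y := X.biUnion Vc with hYdef
    have hYcard : Y.card = m * X.card := by
      rw [hYdef, card_biUnion (fun i _ j _ hij => hdisj i j hij)]
      rw [Finset.sum_congr rfl (fun i _ => hsize i), Finset.sum_const, smul_eq_mul, mul_comm]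
    have hc1 : d * (((m * X.card).choose 2 : ℕ) : ℝ) - ρ * (Fintype.card V : ℝ) ^ 2
        ≤ (inducedEdgeCount G Y : ℝ) := by
      have := hdense Y
      rwa [hYcard] at this
    have hc2 : (inducedEdgeCount G Y : ℝ) ≤ (inducedEdgeCount G' Y : ℝ)
        + Y.card * ((δ + ε) * (Fintype.card V : ℝ)) :=
      aux_sub G G' hsub Y _ hdeg
    have hc3 : (inducedEdgeCount G' Y : ℝ) ≤ (m : ℝ) * m * (inducedEdgeCount R X : ℝ) := by
      have := aux_count G' hL R m Vc hsize hdisj hempty hpure X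
      rw [← hYdef] at this
      exact_mod_cast this
    set EG : ℝ := (inducedEdgeCount G Y : ℝ) with hEG
    set EG' : ℝ := (inducedEdgeCount G' Y : ℝ) with hEG'
    set ER : ℝ := (inducedEdgeCount R X : ℝ) with hER
    clear_value EG EG' ER
    have hcover' : (univ : Finset V) ⊆ V₀ ∪ univ.biUnion Vc := by
      intro v _
      rcases hcover v with h | ⟨i, hi⟩
      · exact mem_union_left _ h
      · exact mem_union_right _ (mem_biUnion.mpr ⟨i, mem_univ i, hi⟩)
    have hncard : (Fintype.card V : ℝ) ≤ (V₀.card : ℝ) + (L : ℝ) * m := by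
      have h1 : Fintype.card V ≤ V₀.card + L * m := by
        calc Fintype.card V = (univ : Finset V).card := (Finset.card_univ).symm
          _ ≤ (V₀ ∪ univ.biUnion Vc).card := card_le_card hcover'
          _ ≤ V₀.card + (univ.biUnion Vc).card := card_union_le _ _
          _ ≤ V₀.card + ∑ i : Fin L, (Vc i).card := by
              exact Nat.add_le_add_left card_biUnion_le _
          _ = V₀.card + L * m := by
              rw [Finset.sum_congr rfl (fun i _ => hsize i), Finset.sum_const, smul_eq_mul,
                card_univ, Fintype.card_fin]
      exact_mod_cast h1
    have hn0 : (0 : ℝ) ≤ (Fintype.card V : ℝ) := Nat.cast_nonneg _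
    have hm1 : (1 : ℝ) ≤ (m : ℝ) := by exact_mod_cast hm
    have hL1 : (1 : ℝ) ≤ (L : ℝ) := by exact_mod_cast hL
    have hxLr : (X.card : ℝ) ≤ (L : ℝ) := by exact_mod_cast hxL
    have hx0 : (0 : ℝ) ≤ (X.card : ℝ) := Nat.cast_nonneg _
    have h9 : 9 * (Fintype.card V : ℝ) ≤ 10 * ((L : ℝ) * m) := by
      nlinarith [hncard, hV0, hn0]
    have hchoose : (m : ℝ) * m * ((X.card.choose 2 : ℕ) : ℝ)
        ≤ (((m * X.card).choose 2 : ℕ) : ℝ) := by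
      rw [Nat.cast_choose_two, Nat.cast_choose_two]
      push_cast
      nlinarith [mul_nonneg (mul_nonneg (by linarith : (0:ℝ) ≤ (m : ℝ)) hx0)
        (sub_nonneg.mpr hm1)]
    have hYr : (Y.card : ℝ) = (m : ℝ) * (X.card : ℝ) := by rw [hYcard]; push_cast; ring
    rw [hYr] at hc2
    exact stmt18_numeric ρ d ε δ M (m : ℝ) (L : ℝ) (X.card : ℝ) (Fintype.card V : ℝ)
      EG EG' ER _ _ hρ hd hε hδ hεδ hε1 hM3ρ hM3δ hm1 hL1 hx0 hxLr hn0 h9 hchoose hc1 hc2 hc3
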